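/- Let A be a band operator on ℓ²(ℤ) and let A₊ := P_ℕ A P_ℕ restricted to the image of P_ℕ, regarded as a bounded operator on ℓ²(ℕ), where P_ℕ is the orthogonal projection onto span{e₁, e₂, …}. If there exists a sequence (h_m)_{m∈ℕ} of integers tending to +∞ such that the limit operator A_h exists and equals A, then N(A) = N(A₊). -/

import Mathlib

noncomputable section
open Filter Complex Topology
open scoped ENNReal

/-- The Hilbert space ℓ²(ℤ). -/
abbrev HZ := lp (fun _ : ℤ => ℂ) 2

/-- The standard orthonormal basis of ℓ²(ℤ). -/
def eZ (i : ℤ) : HZ := lp.single 2 i 1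

/-- Matrix entry `A_{i,j} = ⟨A e_j, e_i⟩` (inner product linear in the first slot,
here written in Mathlib's convention which is conjugate-linear in the first slot). -/
def entry (A : HZ →L[ℂ] HZ) (i j : ℤ) : ℂ := inner ℂ (eZ i) (A (eZ j))

/-- The (closed) numerical range `N(A) = clos {⟨Ax,x⟩ : ‖x‖ = 1}`. -/
def numRange (A : HZ →L[ℂ] HZ) : Set ℂ :=
  closure {z | ∃ x : HZ, ‖x‖ = 1 ∧ (inner ℂ x (A x) : ℂ) = z}

/-- The numerical abscissa `r₀(A) = max {Re z : z ∈ N(A)}`. -/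
def r0 (A : HZ →L[ℂ] HZ) : ℝ := sSup (Complex.re '' numRange A)

/-- The rotated numerical abscissa `r_φ(A) = max {Re z : z ∈ N(e^{iφ}A)}`. -/
def rphi (φ : ℝ) (A : HZ →L[ℂ] HZ) : ℝ := r0 (Complex.exp (φ * Complex.I) • A)

lemma memShift (k : ℤ) (x : HZ) : Memℓp (fun j => x (j - k)) 2 := by
  have h := lp.memℓp x
  rw [memℓp_gen_iff (by norm_num)] at h ⊢
  simpa [Function.comp_def] using ((Equiv.subRight k).summable_iff (f := fun i => ‖x i‖ ^ (2:ℝ≥0∞).toReal)).mpr h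

def shiftLM (k : ℤ) : HZ →ₗ[ℂ] HZ where
  toFun x := ⟨fun j => x (j - k), memShift k x⟩
  map_add' x y := by ext j; simp [lp.coeFn_add] <;> rfl
  map_smul' c x := by ext j; simp [lp.coeFn_smul]

lemma shift_norm (k : ℤ) (x : HZ) : ‖shiftLM k x‖ = ‖x‖ := by
  rw [lp.norm_eq_tsum_rpow (by norm_num) x, lp.norm_eq_tsum_rpow (by norm_num) (shiftLM k x)]
  congr 1
  exact (Equiv.subRight k).tsum_eq (f := fun i => ‖x i‖ ^ (2:ℝ≥0∞).toReal)

/-- The shift operator `V_k` on ℓ²(ℤ), `(V_k x)_j = x_{j-k}`. -/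
def Vshift (k : ℤ) : HZ →L[ℂ] HZ :=
  LinearIsometry.toContinuousLinearMap ⟨shiftLM k, shift_norm k⟩

/-- `B` is a limit operator of `A`: there is a sequence of integers `h` with `|h m| → ∞`
such that `V_{-h_m} A V_{h_m} → B` strongly. -/
def IsLimOp (A B : HZ →L[ℂ] HZ) : Prop :=
  ∃ h : ℕ → ℤ, Tendsto (fun m => |h m|) atTop atTop ∧
    ∀ x : HZ, Tendsto (fun m => Vshift (-(h m)) (A (Vshift (h m) x))) atTop (𝓝 (B x))

/-- The operator spectrum: the set of all limit operators of `A`. -/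
def opSpec (A : HZ →L[ℂ] HZ) : Set (HZ →L[ℂ] HZ) := {B | IsLimOp A B}

/-- A band operator: only finitely many diagonals are nonzero. -/
def IsBandOp (A : HZ →L[ℂ] HZ) : Prop :=
  ∃ N : ℕ, ∀ i j : ℤ, (N : ℤ) < |i - j| → entry A i j = 0

/-- `M(U_n, …, U_m)`: the k-th diagonal has entries in `U k` for `n ≤ k ≤ m`,
and all other diagonals vanish. -/
def Mset (n m : ℤ) (U : ℤ → Set ℂ) : Set (HZ →L[ℂ] HZ) :=
  {A | ∀ i k : ℤ, (n ≤ k → k ≤ m → entry A (i + k) i ∈ U k) ∧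
      (¬(n ≤ k ∧ k ≤ m) → entry A (i + k) i = 0)}

/-- The orthogonal projection `P_{k,l}` onto `span{e_k, …, e_l}`. -/
def projIcc (k l : ℤ) : HZ →L[ℂ] HZ :=
  ∑ i ∈ Finset.Icc k l, (innerSL ℂ (eZ i)).smulRight (eZ i)

/-- The finite matrix `b` placed in `ℓ²(ℤ)` with rows/columns at positions `k, …, k+s`. -/
def embedMat (k : ℤ) (s : ℕ) (b : Fin (s+1) → Fin (s+1) → ℂ) : HZ →L[ℂ] HZ :=
  ∑ p : Fin (s+1), ∑ q : Fin (s+1),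
    b p q • (innerSL ℂ (eZ (k + (q : ℤ)))).smulRight (eZ (k + (p : ℤ)))

/-- A finite square matrix whose k-th diagonal entries lie in `U k` for `n ≤ k ≤ m`
and whose remaining entries vanish. -/
def finPattern (n m : ℤ) (U : ℤ → Set ℂ) (s : ℕ) (b : Fin (s+1) → Fin (s+1) → ℂ) : Prop :=
  ∀ p q : Fin (s+1), (n ≤ (p : ℤ) - (q : ℤ) → (p : ℤ) - (q : ℤ) ≤ m →
      b p q ∈ U ((p : ℤ) - (q : ℤ))) ∧
    (¬(n ≤ (p : ℤ) - (q : ℤ) ∧ (p : ℤ) - (q : ℤ) ≤ m) → b p q = 0)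

/-- Pseudo-ergodic operators `ΨE(U_n, …, U_m)`. -/
def PsiE (n m : ℤ) (U : ℤ → Set ℂ) : Set (HZ →L[ℂ] HZ) :=
  {A | A ∈ Mset n m U ∧ ∀ ε > (0:ℝ), ∀ (s : ℕ) (b : Fin (s+1) → Fin (s+1) → ℂ),
    finPattern n m U s b → ∃ k : ℤ,
      ‖projIcc k (k + s) ∘L A ∘L projIcc k (k + s) - embedMat k s b‖ ≤ ε}

/-- The essential spectrum: the set of `λ` such that `A - λI` is not Fredholm. -/
def essSpec (A : HZ →L[ℂ] HZ) : Set ℂ :=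
  {lam | ¬(FiniteDimensional ℂ (LinearMap.ker ((A - lam • (1 : HZ →L[ℂ] HZ) : HZ →L[ℂ] HZ) : HZ →ₗ[ℂ] HZ)) ∧
      FiniteDimensional ℂ ((LinearMap.range ((A - lam • (1 : HZ →L[ℂ] HZ) : HZ →L[ℂ] HZ) : HZ →ₗ[ℂ] HZ))ᗮ))}

/-- The Hilbert space ℓ²(ℕ). -/
abbrev HN := lp (fun _ : ℕ => ℂ) 2

def eN (i : ℕ) : HN := lp.single 2 i 1

def entryN (A : HN →L[ℂ] HN) (i j : ℕ) : ℂ := inner ℂ (eN i) (A (eN j))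

def numRangeN (A : HN →L[ℂ] HN) : Set ℂ :=
  closure {z | ∃ x : HN, ‖x‖ = 1 ∧ (inner ℂ x (A x) : ℂ) = z}

def r0N (A : HN →L[ℂ] HN) : ℝ := sSup (Complex.re '' numRangeN A)

/-! ### Auxiliary lemmas -/

section Aux

lemma Vshift_apply (k : ℤ) (x : HZ) (j : ℤ) : Vshift k x j = x (j - k) := rfl

def Vli (k : ℤ) : HZ →ₗᵢ[ℂ] HZ := ⟨shiftLM k, shift_norm k⟩

lemma Vshift_eq (k : ℤ) (x : HZ) : Vshift k x = Vli k x := rfl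

lemma Vshift_norm (k : ℤ) (x : HZ) : ‖Vshift k x‖ = ‖x‖ := shift_norm k x

lemma Vshift_inner (k : ℤ) (x y : HZ) :
    (inner ℂ (Vshift k x) (Vshift k y) : ℂ) = inner ℂ x y := (Vli k).inner_map_map x y

lemma Vshift_comp (k : ℤ) (w : HZ) : Vshift k (Vshift (-k) w) = w := by
  ext j
  simp [Vshift_apply, sub_neg_eq_add, sub_add_cancel]

lemma Vshift_adjoint (k : ℤ) (u w : HZ) :
    (inner ℂ (Vshift k u) w : ℂ) = inner ℂ u (Vshift (-k) w) := by
  conv_lhs => rw [← Vshift_comp k w]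
  exact Vshift_inner k u (Vshift (-k) w)

/-- The embedding map `ℕ → ℤ`, `n ↦ n + 1`. -/
def emb (n : ℕ) : ℤ := (n : ℤ) + 1

lemma emb_inj : Function.Injective emb := by
  intro a b hab
  simpa [emb] using hab

lemma mem_range_emb {j : ℤ} : j ∈ Set.range emb ↔ 1 ≤ j := by
  constructor
  · rintro ⟨n, rfl⟩; simp only [emb]; omega
  · intro hj; exact ⟨(j - 1).toNat, by simp only [emb]; omega⟩

lemma memEmbed (x : HN) : Memℓp (Function.extend emb (⇑x) 0) 2 := by
  have h := lp.memℓp x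
  rw [memℓp_gen_iff (by norm_num)] at h ⊢
  refine (emb_inj.summable_iff (f := fun j => ‖Function.extend emb (⇑x) 0 j‖ ^ (2:ℝ≥0∞).toReal)
    (fun j hj => ?_)).mp ?_
  · show ‖Function.extend emb (⇑x) 0 j‖ ^ (2:ℝ≥0∞).toReal = 0
    rw [Function.extend_apply' _ _ _ (fun hr => hj hr), Pi.zero_apply, norm_zero,
      Real.zero_rpow (by simp)]
  · convert h using 1
    funext n
    simp [Function.comp, emb_inj.extend_apply]

def embedLM : HN →ₗ[ℂ] HZ where
  toFun x := ⟨Function.extend emb (⇑x) 0, memEmbed x⟩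
  map_add' x y := by
    ext j
    by_cases hj : j ∈ Set.range emb
    · obtain ⟨n, rfl⟩ := hj
      show Function.extend emb (⇑x + ⇑y) 0 (emb n)
        = Function.extend emb (⇑x) 0 (emb n) + Function.extend emb (⇑y) 0 (emb n)
      rw [emb_inj.extend_apply, emb_inj.extend_apply, emb_inj.extend_apply]; rfl
    · simp only [lp.coeFn_add]
      show Function.extend emb (⇑x + ⇑y) 0 j
        = Function.extend emb (⇑x) 0 j + Function.extend emb (⇑y) 0 j
      rw [Function.extend_apply' _ _ _ (fun hr => hj hr),
        Function.extend_apply' _ _ _ (fun hr => hj hr),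
        Function.extend_apply' _ _ _ (fun hr => hj hr)]
      simp
  map_smul' c x := by
    ext j
    by_cases hj : j ∈ Set.range emb
    · obtain ⟨n, rfl⟩ := hj
      simp [emb_inj.extend_apply, lp.coeFn_smul]
    · simp only [lp.coeFn_smul]
      show Function.extend emb (c • ⇑x) 0 j = c • Function.extend emb (⇑x) 0 j
      rw [Function.extend_apply' _ _ _ (fun hr => hj hr),
        Function.extend_apply' _ _ _ (fun hr => hj hr)]
      simp

lemma embedLM_apply (x : HN) (j : ℤ) : embedLM x j = Function.extend emb (⇑x) 0 j := rfl

lemma embed_norm (x : HN) : ‖embedLM x‖ = ‖x‖ := by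
  rw [lp.norm_eq_tsum_rpow (by norm_num) x, lp.norm_eq_tsum_rpow (by norm_num) (embedLM x)]
  congr 1
  rw [← emb_inj.tsum_eq (f := fun j => ‖embedLM x j‖ ^ (2:ℝ≥0∞).toReal)]
  · congr 1
    funext n
    simp [embedLM_apply, emb_inj.extend_apply]
  · intro j hj
    by_contra hr
    apply hj
    show ‖embedLM x j‖ ^ (2:ℝ≥0∞).toReal = 0
    rw [embedLM_apply, Function.extend_apply' _ _ _ (fun hh => hr hh), Pi.zero_apply,
      norm_zero, Real.zero_rpow (by simp)]

def iotaIso : HN →ₗᵢ[ℂ] HZ := ⟨embedLM, embed_norm⟩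

def iota : HN →L[ℂ] HZ := iotaIso.toContinuousLinearMap

lemma iota_apply (x : HN) (j : ℤ) : iota x j = Function.extend emb (⇑x) 0 j := rfl

lemma iota_apply_emb (x : HN) (n : ℕ) : iota x ((n : ℤ) + 1) = x n := by
  rw [iota_apply]
  exact emb_inj.extend_apply _ _ _

lemma iota_apply_nonpos (x : HN) {j : ℤ} (hj : ¬ 1 ≤ j) : iota x j = 0 := by
  rw [iota_apply]
  exact Function.extend_apply' _ _ _ (fun hr => hj (mem_range_emb.mp hr))

lemma iota_norm (x : HN) : ‖iota x‖ = ‖x‖ := embed_norm x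

end Aux
section Aux2

lemma eZ_apply_self (i : ℤ) : eZ i i = 1 := lp.single_apply_self 2 i 1
lemma eZ_apply_ne {i j : ℤ} (hij : j ≠ i) : eZ i j = 0 := lp.single_apply_ne 2 i 1 hij
lemma eN_apply_self (i : ℕ) : eN i i = 1 := lp.single_apply_self 2 i 1
lemma eN_apply_ne {i j : ℕ} (hij : j ≠ i) : eN i j = 0 := lp.single_apply_ne 2 i 1 hij

lemma inner_eZ (i : ℤ) (w : HZ) : (inner ℂ (eZ i) w : ℂ) = w i := by
  rw [lp.inner_eq_tsum]
  rw [tsum_eq_single i (fun j hj => by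
    rw [eZ_apply_ne hj, inner_zero_left])]
  rw [eZ_apply_self]
  simp [RCLike.inner_apply]

lemma inner_eN (i : ℕ) (w : HN) : (inner ℂ (eN i) w : ℂ) = w i := by
  rw [lp.inner_eq_tsum]
  rw [tsum_eq_single i (fun j hj => by
    rw [eN_apply_ne hj, inner_zero_left])]
  rw [eN_apply_self]
  simp [RCLike.inner_apply]

lemma iota_eN (n : ℕ) : iota (eN n) = eZ ((n : ℤ) + 1) := by
  ext j
  by_cases hj : j = (n : ℤ) + 1
  · subst hj
    rw [iota_apply_emb, eZ_apply_self, eN_apply_self]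
  · rw [eZ_apply_ne hj]
    by_cases h1 : 1 ≤ j
    · obtain ⟨m, rfl⟩ := mem_range_emb.mpr h1
      rw [show emb m = (m : ℤ) + 1 from rfl, iota_apply_emb]
      exact eN_apply_ne (fun hc => hj (by rw [hc]; rfl))
    · exact iota_apply_nonpos _ h1

lemma dense_span_eN : Dense (Submodule.span ℂ (Set.range eN) : Set HN) := by
  intro x
  refine mem_closure_of_tendsto (lp.hasSum_single (by norm_num) x) ?_
  filter_upwards with F
  refine Submodule.sum_mem _ (fun i _ => ?_)
  have : lp.single 2 i (x i) = x i • eN i := by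
    rw [eN, ← lp.single_smul]
    norm_num
  rw [this]
  exact Submodule.smul_mem _ _ (Submodule.subset_span ⟨i, rfl⟩)

end Aux2
section Aux3

variable (A : HZ →L[ℂ] HZ) (Aplus : HN →L[ℂ] HN)
variable (hAplus : ∀ i j : ℕ, entryN Aplus i j = entry A ((i : ℤ) + 1) ((j : ℤ) + 1))
include hAplus

lemma coord_eq (n : ℕ) (y : HN) : (A (iota y)) ((n : ℤ) + 1) = Aplus y n := by
  have key : (innerSL ℂ (eZ ((n : ℤ) + 1))).comp (A.comp iota)
      = (innerSL ℂ (eN n)).comp Aplus := by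
    refine ContinuousLinearMap.ext_on dense_span_eN ?_
    rintro _ ⟨j, rfl⟩
    simp only [ContinuousLinearMap.comp_apply, innerSL_apply_apply]
    rw [iota_eN]
    exact (hAplus n j).symm
  have := DFunLike.congr_fun key y
  simp only [ContinuousLinearMap.comp_apply, innerSL_apply_apply] at this
  rwa [inner_eZ, inner_eN] at this

lemma inner_embed (x y : HN) :
    (inner ℂ (iota x) (A (iota y)) : ℂ) = inner ℂ x (Aplus y) := by
  rw [lp.inner_eq_tsum, lp.inner_eq_tsum]
  rw [← emb_inj.tsum_eq
      (f := fun j : ℤ => (inner ℂ (iota x j) (A (iota y) j) : ℂ)) ?_]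
  · congr 1
    funext n
    show (inner ℂ (iota x (emb n)) (A (iota y) (emb n)) : ℂ) = inner ℂ (x n) (Aplus y n)
    rw [show emb n = (n : ℤ) + 1 from rfl, iota_apply_emb, coord_eq A Aplus hAplus]
  · intro j hj
    by_contra hr
    apply hj
    show (inner ℂ (iota x j) (A (iota y) j) : ℂ) = 0
    rw [iota_apply_nonpos x (fun h1 => hr (mem_range_emb.mpr h1)), inner_zero_left]

end Aux3
section Aux4

variable (A : HZ →L[ℂ] HZ) (Aplus : HN →L[ℂ] HN)
variable (hAplus : ∀ i j : ℕ, entryN Aplus i j = entry A ((i : ℤ) + 1) ((j : ℤ) + 1))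

lemma numRangeN_closed : IsClosed (numRangeN Aplus) := isClosed_closure

lemma exists_iota (w : HZ) (hw : ∀ j : ℤ, ¬ 1 ≤ j → w j = 0) : ∃ y : HN, iota y = w := by
  have hmem : Memℓp (fun n : ℕ => w (emb n)) 2 := by
    have hsum := lp.memℓp w
    rw [memℓp_gen_iff (by norm_num)] at hsum ⊢
    exact (emb_inj.summable_iff (f := fun j : ℤ => ‖w j‖ ^ (2 : ℝ≥0∞).toReal)
      (fun j hj => by
        show ‖w j‖ ^ (2 : ℝ≥0∞).toReal = 0
        rw [hw j (fun h1 => hj (mem_range_emb.mpr h1)), norm_zero,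
          Real.zero_rpow (by simp)])).mpr hsum
  refine ⟨⟨fun n => w (emb n), hmem⟩, ?_⟩
  ext j
  by_cases h1 : 1 ≤ j
  · obtain ⟨n, rfl⟩ := mem_range_emb.mpr h1
    rw [iota_apply]
    exact emb_inj.extend_apply _ _ _
  · rw [iota_apply_nonpos _ h1, hw j h1]

include hAplus in
lemma subset_ge : numRangeN Aplus ⊆ numRange A := by
  refine closure_mono ?_
  rintro z ⟨y, hy, rfl⟩
  exact ⟨iota y, by rw [iota_norm, hy], inner_embed A Aplus hAplus y y⟩

include hAplus in
lemma finsupp_mem (h : ℕ → ℤ) (hh : Tendsto h atTop atTop)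
    (hlim : ∀ x : HZ,
      Tendsto (fun m => Vshift (-(h m)) (A (Vshift (h m) x))) atTop (𝓝 (A x)))
    (u : HZ) (hu : ‖u‖ = 1) (F : Finset ℤ) (hF : ∀ j ∉ F, u j = 0) :
    (inner ℂ u (A u) : ℂ) ∈ numRangeN Aplus := by
  set M : ℕ := F.sup fun j => j.natAbs with hM
  have hFM : ∀ j ∈ F, j.natAbs ≤ M := fun j hj => Finset.le_sup (f := fun j => j.natAbs) hj
  have hev : ∀ᶠ m in atTop, (M : ℤ) + 1 ≤ h m := hh.eventually_ge_atTop _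
  have hc : Tendsto (fun m => (inner ℂ u (Vshift (-(h m)) (A (Vshift (h m) u))) : ℂ)) atTop
      (𝓝 (inner ℂ u (A u))) := Tendsto.inner tendsto_const_nhds (hlim u)
  refine (numRangeN_closed Aplus).mem_of_tendsto hc ?_
  filter_upwards [hev] with m hm
  have hw : ∀ j : ℤ, ¬ 1 ≤ j → Vshift (h m) u j = 0 := by
    intro j hj
    rw [Vshift_apply]
    refine hF _ (fun hmem => ?_)
    have := hFM _ hmem
    omega
  obtain ⟨y, hy⟩ := exists_iota (Vshift (h m) u) hw
  have hny : ‖y‖ = 1 := by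
    rw [← iota_norm, hy, Vshift_norm, hu]
  have key : (inner ℂ u (Vshift (-(h m)) (A (Vshift (h m) u))) : ℂ) = inner ℂ y (Aplus y) := by
    rw [← Vshift_adjoint, ← hy]
    exact inner_embed A Aplus hAplus y y
  rw [key]
  exact subset_closure ⟨y, hny, rfl⟩

end Aux4

set_option maxHeartbeats 1000000 in
set_option synthInstance.maxHeartbeats 400000 in
/-- If a band operator `A` on `ℓ²(ℤ)` is its own limit operator along a
sequence of integers tending to `+∞`, then `N(A) = N(A₊)`, where `A₊` is the compression of
`A` to `ℓ²(ℕ)` (the operator whose matrix entries are `(A₊)_{i,j} = A_{i+1,j+1}`). -/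
theorem numRange_eq_numRange_compression
    (A : HZ →L[ℂ] HZ) (hA : IsBandOp A)
    (h : ℕ → ℤ) (hh : Tendsto h atTop atTop)
    (hlim : ∀ x : HZ,
      Tendsto (fun m => Vshift (-(h m)) (A (Vshift (h m) x))) atTop (𝓝 (A x)))
    (Aplus : HN →L[ℂ] HN)
    (hAplus : ∀ i j : ℕ, entryN Aplus i j = entry A ((i : ℤ) + 1) ((j : ℤ) + 1)) :
    numRange A = numRangeN Aplus := by
  refine Set.Subset.antisymm ?_ (subset_ge A Aplus hAplus)
  refine closure_minimal ?_ (numRangeN_closed Aplus)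
  rintro z ⟨x, hx, rfl⟩
  set s : Finset ℤ → HZ := fun F => ∑ i ∈ F, lp.single 2 i (x i) with hs_def
  have hs : Tendsto s atTop (𝓝 x) := lp.hasSum_single (by norm_num) x
  have hns : Tendsto (fun F => ‖s F‖) atTop (𝓝 1) := by
    rw [← hx]; exact hs.norm
  have hinv : Tendsto (fun F => ‖s F‖⁻¹) atTop (𝓝 1) := by
    simpa using hns.inv₀ one_ne_zero
  have hinvC : Tendsto (fun F => ((‖s F‖ : ℂ))⁻¹) atTop (𝓝 1) := by
    have := (Complex.continuous_ofReal.tendsto (1 : ℝ)).comp hinv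
    simpa [Function.comp_def, Complex.ofReal_inv] using this
  set u : Finset ℤ → HZ := fun F => ((‖s F‖ : ℂ))⁻¹ • s F with hu_def
  have hu : Tendsto u atTop (𝓝 x) := by
    simpa using hinvC.smul hs
  have hg : Tendsto (fun F => (inner ℂ (u F) (A (u F)) : ℂ)) atTop (𝓝 (inner ℂ x (A x))) :=
    Tendsto.inner hu ((A.continuous.tendsto x).comp hu)
  refine (numRangeN_closed Aplus).mem_of_tendsto hg ?_
  have hpos : ∀ᶠ F in atTop, (1 : ℝ) / 2 < ‖s F‖ := hns.eventually (eventually_gt_nhds (by norm_num))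
  filter_upwards [hpos] with F hF
  have hsne : ‖s F‖ ≠ 0 := by positivity
  have hnu : ‖u F‖ = 1 := by
    show ‖((‖s F‖ : ℂ))⁻¹ • s F‖ = 1
    rw [norm_smul, norm_inv, Complex.norm_real, Real.norm_eq_abs,
      _root_.abs_of_nonneg (norm_nonneg _), inv_mul_cancel₀ hsne]
  refine finsupp_mem A Aplus hAplus h hh hlim (u F) hnu F (fun j hj => ?_)
  have hz : s F j = 0 := by
    simp only [hs_def, lp.coeFn_sum, Finset.sum_apply]
    exact Finset.sum_eq_zero fun i hi => lp.single_apply_ne 2 i _ (fun hji => hj (hji ▸ hi))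
  show (((‖s F‖ : ℂ))⁻¹ • s F) j = 0
  rw [lp.coeFn_smul, Pi.smul_apply, hz, smul_zero]
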